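/- Let X ⊆ ℝ^A be a polyhedron (the follower's feasible flows), A₁ ⊆ A the tolled arcs, c ≥ 0 costs, and f(t) = min_{x∈X} (⟨c,x⟩ + ⟨t, x_{A₁}⟩) for t ≥ 0. A point x ∈ X is bilevel feasible (∃ t ≥ 0 with f(t) = ⟨c,x⟩ + ⟨t, x_{A₁}⟩) if and only if ⟨c,x⟩ = g(x_{A₁}), where g(w) = sup_{t ≥ 0} (f(t) − ⟨t,w⟩). -/

import Mathlib

noncomputable section
open Set Finset

/-- A polyhedron: finite intersection of closed half-spaces. -/
def IsPolyhedron {E : Type*} [AddCommGroup E] [Module ℝ E] (P : Set E) : Prop :=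
  ∃ (m : ℕ) (L : Fin m → E →ₗ[ℝ] ℝ) (b : Fin m → ℝ), P = {x | ∀ i, L i x ≤ b i}

section Auxiliary

/-- Conic Carathéodory: a nonneg combination over `s` equals a nonneg combination
over a subset on which the vectors are linearly independent. -/
theorem cara_cone {E : Type*} [AddCommGroup E] [Module ℝ E] {ι : Type*} [DecidableEq ι]
    (v : ι → E) :
    ∀ (s : Finset ι) (lam : ι → ℝ), (∀ i ∈ s, 0 ≤ lam i) →
      ∃ s' : Finset ι, s' ⊆ s ∧ LinearIndependent ℝ (fun i : s' => v i) ∧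
        ∃ mu : ι → ℝ, (∀ i ∈ s', 0 ≤ mu i) ∧
          ∑ i ∈ s', mu i • v i = ∑ i ∈ s, lam i • v i := by
  intro s
  induction s using Finset.strongInduction with
  | _ s IH =>
    intro lam hlam
    set s₀ : Finset ι := s.filter (fun i => lam i ≠ 0) with hs₀
    have hsub : s₀ ⊆ s := Finset.filter_subset _ _
    have hsum0 : ∑ i ∈ s₀, lam i • v i = ∑ i ∈ s, lam i • v i := by
      refine Finset.sum_subset hsub ?_
      intro i hi hni
      have : lam i = 0 := by
        by_contra h
        exact hni (Finset.mem_filter.2 ⟨hi, h⟩)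
      simp [this]
    by_cases hli : LinearIndependent ℝ (fun i : s₀ => v i)
    · exact ⟨s₀, hsub, hli, lam, fun i hi => hlam i (hsub hi), hsum0⟩
    · -- extract a nontrivial relation
      rw [Fintype.not_linearIndependent_iff] at hli
      obtain ⟨g, hgsum, j₀, hj₀⟩ := hli
      -- extend g to ι
      classical
      set G : ι → ℝ := fun i => if h : i ∈ s₀ then g ⟨i, h⟩ else 0 with hG
      have hGsum : ∑ i ∈ s₀, G i • v i = 0 := by
        rw [← hgsum, ← Finset.sum_attach s₀ (fun i => G i • v i)]
        refine Finset.sum_congr rfl ?_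
        intro i _
        simp [hG, i.2]
      have hGsupp : ∀ i, i ∉ s₀ → G i = 0 := by
        intro i hi; simp [hG, hi]
      -- WLOG there is i with G i > 0
      have key : ∀ (G : ι → ℝ), (∑ i ∈ s₀, G i • v i = 0) → (∀ i, i ∉ s₀ → G i = 0) →
          (∃ i ∈ s₀, 0 < G i) →
          ∃ s' : Finset ι, s' ⊆ s ∧ LinearIndependent ℝ (fun i : s' => v i) ∧
            ∃ mu : ι → ℝ, (∀ i ∈ s', 0 ≤ mu i) ∧
              ∑ i ∈ s', mu i • v i = ∑ i ∈ s, lam i • v i := by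
        intro G hGsum hGsupp ⟨i₁, hi₁, hGi₁⟩
        set T : Finset ι := s₀.filter (fun i => 0 < G i) with hT
        have hTne : T.Nonempty := ⟨i₁, Finset.mem_filter.2 ⟨hi₁, hGi₁⟩⟩
        -- ratio minimization
        obtain ⟨i₂, hi₂T, hi₂min⟩ := T.exists_min_image (fun i => lam i / G i) hTne
        have hi₂s₀ : i₂ ∈ s₀ := (Finset.mem_filter.1 hi₂T).1
        have hGi₂ : 0 < G i₂ := (Finset.mem_filter.1 hi₂T).2
        set τ : ℝ := lam i₂ / G i₂ with hτ
        have hlam_pos : ∀ i ∈ s₀, 0 < lam i := by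
          intro i hi
          rcases Finset.mem_filter.1 hi with ⟨his, hne⟩
          exact lt_of_le_of_ne (hlam i his) (Ne.symm hne)
        have hτ0 : 0 ≤ τ := div_nonneg (hlam i₂ (hsub hi₂s₀)) hGi₂.le
        set lam' : ι → ℝ := fun i => lam i - τ * G i with hlam'
        have hlam'_nonneg : ∀ i ∈ s, 0 ≤ lam' i := by
          intro i hi
          by_cases hi₀ : i ∈ s₀
          · by_cases hiT : 0 < G i
            · have := hi₂min i (Finset.mem_filter.2 ⟨hi₀, hiT⟩)
              have : τ * G i ≤ lam i := by
                rw [hτ] at this ⊢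
                calc lam i₂ / G i₂ * G i ≤ lam i / G i * G i := by
                      apply mul_le_mul_of_nonneg_right this hiT.le
                  _ = lam i := by field_simp
              simpa [hlam'] using sub_nonneg.2 this
            · push_neg at hiT
              have : τ * G i ≤ 0 := mul_nonpos_of_nonneg_of_nonpos hτ0 hiT
              have := hlam i hi
              simp only [hlam']; linarith
          · simp [hlam', hGsupp i hi₀, hlam i hi]
        have hlam'i₂ : lam' i₂ = 0 := by
          simp only [hlam', hτ]; field_simp; ring
        have hsum' : ∑ i ∈ s, lam' i • v i = ∑ i ∈ s, lam i • v i := by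
          have hGs : ∑ i ∈ s, G i • v i = 0 := by
            rw [← hGsum]
            exact (Finset.sum_subset hsub (fun i hi hni => by simp [hGsupp i hni])).symm
          simp only [hlam', sub_smul, Finset.sum_sub_distrib, mul_smul, ← Finset.smul_sum, hGs,
            smul_zero, sub_zero]
        -- recurse on s.erase i₂  (note supp(lam') ⊆ s₀ \ {i₂} ⊆ s.erase i₂)
        have hi₂s : i₂ ∈ s := hsub hi₂s₀
        have herase : s.erase i₂ ⊂ s := Finset.erase_ssubset hi₂s
        have hsum'' : ∑ i ∈ s.erase i₂, lam' i • v i = ∑ i ∈ s, lam' i • v i := by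
          rw [← Finset.add_sum_erase s _ hi₂s, hlam'i₂]; simp
        obtain ⟨s', hs'sub, hs'li, mu, hmu, hmusum⟩ :=
          IH (s.erase i₂) herase lam' (fun i hi => hlam'_nonneg i (Finset.mem_of_mem_erase hi))
        exact ⟨s', hs'sub.trans (Finset.erase_subset _ _), hs'li, mu, hmu, by
          rw [hmusum, hsum'', hsum']⟩
      by_cases hpos : ∃ i ∈ s₀, 0 < G i
      · exact key G hGsum hGsupp hpos
      · refine key (-G) (by simpa using hGsum) (fun i hi => by simp [hGsupp i hi]) ?_
        push_neg at hpos
        refine ⟨j₀, j₀.2, ?_⟩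
        have := hpos j₀ j₀.2
        have hne : G (j₀ : ι) ≠ 0 := by simpa [hG, j₀.2] using hj₀
        simp only [Pi.neg_apply]
        cases lt_or_gt_of_ne hne with
        | inl h => linarith
        | inr h => exact absurd h (not_lt.2 (hpos j₀ j₀.2))

/-- A finitely generated convex cone in a finite-dimensional normed space is closed. -/
theorem fg_cone_closed {E : Type*} [NormedAddCommGroup E] [NormedSpace ℝ E]
    [FiniteDimensional ℝ E] {ι : Type*} [Fintype ι] [DecidableEq ι] (v : ι → E) :
    IsClosed {z : E | ∃ lam : ι → ℝ, (∀ i, 0 ≤ lam i) ∧ z = ∑ i, lam i • v i} := by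
  classical
  have hrepr : {z : E | ∃ lam : ι → ℝ, (∀ i, 0 ≤ lam i) ∧ z = ∑ i, lam i • v i}
      = ⋃ p : {s' : Finset ι // LinearIndependent ℝ (fun i : s' => v i)},
        {z : E | ∃ mu : ι → ℝ, (∀ i, 0 ≤ mu i) ∧ z = ∑ i ∈ (p : Finset ι), mu i • v i} := by
    ext z
    constructor
    · rintro ⟨lam, hlam, rfl⟩
      obtain ⟨s', hsub, hli, mu, hmu, hsum⟩ :=
        cara_cone v Finset.univ lam (fun i _ => hlam i)
      refine Set.mem_iUnion.2 ⟨⟨s', hli⟩, ⟨fun i => if i ∈ s' then mu i else 0, ?_, ?_⟩⟩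
      · intro i
        by_cases h : i ∈ s' <;> simp [h, hmu]
      · rw [← hsum]
        exact (Finset.sum_congr rfl fun i hi => by simp [hi]).symm
    · intro hz
      obtain ⟨⟨s', hli⟩, mu, hmu, rfl⟩ := Set.mem_iUnion.1 hz
      refine ⟨fun i => if i ∈ s' then mu i else 0, fun i => by
        by_cases h : i ∈ s' <;> simp [h, hmu], ?_⟩
      rw [← Finset.sum_subset (Finset.subset_univ s') (fun i _ hni => by simp [hni])]
      exact Finset.sum_congr rfl fun i hi => by simp [hi]
  rw [hrepr]
  refine isClosed_iUnion_of_finite ?_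
  rintro ⟨s', hli⟩
  set Φ : (s' → ℝ) →ₗ[ℝ] E := Fintype.linearCombination ℝ (fun i : s' => v i) with hΦ
  have hΦapp : ∀ nu : s' → ℝ, Φ nu = ∑ i, nu i • v i := fun nu => rfl
  have hinj : Function.Injective Φ := by
    rw [← LinearMap.ker_eq_bot, LinearMap.ker_eq_bot']
    intro nu hnu
    rw [hΦapp] at hnu
    exact funext (Fintype.linearIndependent_iff.1 hli nu hnu)
  set K : Set (s' → ℝ) := {nu | ∀ i, 0 ≤ nu i} with hK
  have hKclosed : IsClosed K := by
    have : K = ⋂ i, {nu : s' → ℝ | 0 ≤ nu i} := by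
      ext nu; simp [hK, Set.mem_iInter]
    rw [this]
    exact isClosed_iInter fun i => isClosed_le continuous_const (continuous_apply i)
  have himg : {z : E | ∃ mu : ι → ℝ, (∀ i, 0 ≤ mu i) ∧ z = ∑ i ∈ s', mu i • v i}
      = Φ '' K := by
    ext z
    constructor
    · rintro ⟨mu, hmu, rfl⟩
      refine ⟨fun i => mu i, fun i => hmu i, ?_⟩
      rw [hΦapp]
      exact Finset.sum_attach s' (fun i => mu i • v i)
    · rintro ⟨nu, hnu, rfl⟩
      refine ⟨fun i => if h : i ∈ s' then nu ⟨i, h⟩ else 0, fun i => by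
        by_cases h : i ∈ s'
        · simpa [h] using hnu ⟨i, h⟩
        · simp [h], ?_⟩
      rw [hΦapp, ← Finset.sum_attach s'
        (fun i => (if h : i ∈ s' then nu ⟨i, h⟩ else 0) • v i)]
      refine (Finset.sum_congr rfl fun i _ => by simp [i.2]).symm
  rw [himg]
  set e : (s' → ℝ) ≃L[ℝ] LinearMap.range Φ :=
    (LinearEquiv.ofInjective Φ hinj).toContinuousLinearEquiv with he
  have hrange_closed : IsClosed ((LinearMap.range Φ : Submodule ℝ E) : Set E) :=
    Submodule.closed_of_finiteDimensional _
  have h1 : IsClosed (e '' K) := e.toHomeomorph.isClosedMap _ hKclosed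
  have h2 : Φ '' K = Subtype.val '' (e '' K) := by
    rw [Set.image_image]
    exact Set.image_congr fun nu _ => rfl
  rw [h2]
  exact hrange_closed.isClosedEmbedding_subtypeVal.isClosedMap _ h1

theorem fg_cone_convex {E : Type*} [AddCommGroup E] [Module ℝ E]
    {ι : Type*} [Fintype ι] (v : ι → E) :
    Convex ℝ {z : E | ∃ lam : ι → ℝ, (∀ i, 0 ≤ lam i) ∧ z = ∑ i, lam i • v i} := by
  rintro z₁ ⟨l₁, hl₁, rfl⟩ z₂ ⟨l₂, hl₂, rfl⟩ a b ha hb _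
  refine ⟨fun i => a * l₁ i + b * l₂ i,
    fun i => add_nonneg (mul_nonneg ha (hl₁ i)) (mul_nonneg hb (hl₂ i)), ?_⟩
  rw [Finset.smul_sum, Finset.smul_sum, ← Finset.sum_add_distrib]
  refine Finset.sum_congr rfl fun i _ => ?_
  simp [add_smul, mul_smul]

theorem fg_cone_smul {E : Type*} [AddCommGroup E] [Module ℝ E]
    {ι : Type*} [Fintype ι] (v : ι → E) {z : E} {τ : ℝ} (hτ : 0 ≤ τ)
    (hz : z ∈ {z : E | ∃ lam : ι → ℝ, (∀ i, 0 ≤ lam i) ∧ z = ∑ i, lam i • v i}) :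
    τ • z ∈ {z : E | ∃ lam : ι → ℝ, (∀ i, 0 ≤ lam i) ∧ z = ∑ i, lam i • v i} := by
  obtain ⟨lam, hlam, rfl⟩ := hz
  exact ⟨fun i => τ * lam i, fun i => mul_nonneg hτ (hlam i), by
    rw [Finset.smul_sum]; exact Finset.sum_congr rfl fun i _ => by simp [mul_smul]⟩

/-- Expansion of a linear functional on `A → ℝ` along coordinates. -/
theorem lin_expand {A : Type*} [Fintype A] [DecidableEq A] (L : (A → ℝ) →ₗ[ℝ] ℝ)
    (y : A → ℝ) : L y = ∑ a, y a * L (Pi.single a 1) := by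
  conv_lhs => rw [← Finset.univ_sum_single y]
  rw [map_sum]
  refine Finset.sum_congr rfl fun a _ => ?_
  have h1 : Pi.single a (y a) = y a • (Pi.single a 1 : A → ℝ) := by
    ext a'
    by_cases h : a' = a <;> simp [h, Pi.single_apply]
  rw [h1, map_smul, smul_eq_mul]

/-- Decomposition of a continuous linear functional on `(A → ℝ) × ℝ`. -/
theorem clm_decomp {A : Type*} [Fintype A] [DecidableEq A]
    (g : ((A → ℝ) × ℝ) →L[ℝ] ℝ) (w : A → ℝ) (r : ℝ) :
    g (w, r) = (∑ a, w a * g (Pi.single a 1, 0)) + r * g (0, 1) := by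
  set z : A → ((A → ℝ) × ℝ) := fun a => ((Pi.single a 1 : A → ℝ), (0:ℝ)) with hz
  have h1 : (w, r) = (∑ a, w a • z a) + r • ((0 : A → ℝ), (1:ℝ)) := by
    refine Prod.ext ?_ ?_
    · simp only [Prod.fst_add, Prod.fst_sum, Prod.smul_fst, hz]
      have h2 : ∀ a : A, w a • ((Pi.single a 1 : A → ℝ)) = Pi.single a (w a) := by
        intro a; ext a'; by_cases h : a' = a <;> simp [h, Pi.single_apply]
      simp only [h2, Finset.univ_sum_single]
      simp
    · simp only [Prod.snd_add, Prod.snd_sum, Prod.smul_snd, hz]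
      simp
  rw [h1, map_add, map_sum, map_smul, smul_eq_mul]
  congr 1
  exact Finset.sum_congr rfl fun a _ => by rw [map_smul, smul_eq_mul]

/-- Affine Farkas lemma / strong LP duality direction. -/
theorem farkas {A : Type*} [Fintype A] [DecidableEq A] {ι : Type*} [Fintype ι]
    (L : ι → (A → ℝ) →ₗ[ℝ] ℝ) (b : ι → ℝ) (d : (A → ℝ) →ₗ[ℝ] ℝ) (β : ℝ)
    (hne : ∃ y, ∀ i, L i y ≤ b i)
    (h : ∀ y, (∀ i, L i y ≤ b i) → d y ≤ β) :
    ∃ lam : ι → ℝ, (∀ i, 0 ≤ lam i) ∧ (∀ y, ∑ i, lam i * L i y = d y) ∧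
      ∑ i, lam i * b i ≤ β := by
  classical
  set gen : Option ι → ((A → ℝ) × ℝ) := fun j =>
    Option.rec ((0 : A → ℝ), (1:ℝ)) (fun i => ((fun a => L i (Pi.single a 1)), b i)) j with hgen
  set C : Set ((A → ℝ) × ℝ) := {z : (A → ℝ) × ℝ | ∃ lam : Option ι → ℝ, (∀ i, 0 ≤ lam i) ∧ z = ∑ i, lam i • gen i}
    with hC
  have hCclosed : IsClosed C := fg_cone_closed gen
  have hCconvex : Convex ℝ C := fg_cone_convex gen
  have hgenC : ∀ j, gen j ∈ C := by
    intro j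
    refine ⟨fun j' => if j' = j then 1 else 0, fun j' => by positivity, ?_⟩
    simp only [ite_smul, one_smul, zero_smul]
    rw [Finset.sum_ite_eq' Finset.univ j gen]
    simp
  have h0C : (0 : (A → ℝ) × ℝ) ∈ C := ⟨0, fun _ => le_rfl, by simp⟩
  set tgt : (A → ℝ) × ℝ := ((fun a => d (Pi.single a 1)), β) with htgt
  have hmem : tgt ∈ C := by
    by_contra hc
    obtain ⟨g, u, hgu, hgt⟩ := geometric_hahn_banach_closed_point hCconvex hCclosed hc
    have hu0 : 0 < u := by simpa using hgu 0 h0C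
    have hnonpos : ∀ z ∈ C, g z ≤ 0 := by
      intro z hz
      by_contra hgz
      push_neg at hgz
      have hτ : 0 ≤ (u + 1) / g z := by positivity
      have := hgu _ (fg_cone_smul gen hτ hz)
      rw [map_smul, smul_eq_mul, div_mul_cancel₀ _ (ne_of_gt hgz)] at this
      linarith
    set y₀ : A → ℝ := fun a => g (Pi.single a 1, 0) with hy₀
    set s₀ : ℝ := g (0, 1) with hs₀def
    have hdec : ∀ (w : A → ℝ) (r : ℝ), g (w, r) = (∑ a, w a * y₀ a) + r * s₀ :=
      fun w r => clm_decomp g w r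
    have hs₀ : s₀ ≤ 0 := by
      have := hnonpos _ (hgenC none)
      simpa [hgen, hdec] using this
    have hLy₀ : ∀ i, L i y₀ + b i * s₀ ≤ 0 := by
      intro i
      have := hnonpos _ (hgenC (some i))
      rw [hgen] at this
      simp only at this
      rw [hdec] at this
      rw [lin_expand (L i) y₀]
      calc (∑ a, y₀ a * L i (Pi.single a 1)) + b i * s₀
          = (∑ a, L i (Pi.single a 1) * y₀ a) + b i * s₀ := by
            congr 1; exact Finset.sum_congr rfl fun a _ => mul_comm _ _
        _ ≤ 0 := this
    have hdy₀ : 0 < d y₀ + β * s₀ := by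
      have h2 : u < g tgt := hgt
      rw [htgt, hdec] at h2
      have : (∑ a, d (Pi.single a 1) * y₀ a) = d y₀ := by
        rw [lin_expand d y₀]
        exact Finset.sum_congr rfl fun a _ => mul_comm _ _
      rw [this] at h2
      linarith
    rcases lt_or_eq_of_le hs₀ with hs₀lt | hs₀eq
    · -- s₀ < 0 : rescale to get a feasible point violating h
      set y : A → ℝ := (-s₀)⁻¹ • y₀ with hy
      have hns : 0 < -s₀ := by linarith
      have hfeas : ∀ i, L i y ≤ b i := by
        intro i
        rw [hy, map_smul, smul_eq_mul]
        have h3 : L i y₀ ≤ b i * (-s₀) := by nlinarith [hLy₀ i]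
        calc (-s₀)⁻¹ * L i y₀ ≤ (-s₀)⁻¹ * (b i * (-s₀)) := by
              exact mul_le_mul_of_nonneg_left h3 (by positivity)
          _ = b i := by
              field_simp
              exact mul_div_cancel_left₀ _ (ne_of_lt hs₀lt)
      have hviol : β < d y := by
        rw [hy, map_smul, smul_eq_mul]
        have h3 : β * (-s₀) < d y₀ := by nlinarith
        calc β = (-s₀)⁻¹ * (β * (-s₀)) := by
              field_simp
              exact (mul_div_cancel_right₀ _ (ne_of_lt hs₀lt)).symm
          _ < (-s₀)⁻¹ * d y₀ := by
              exact mul_lt_mul_of_pos_left h3 (by positivity)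
      linarith [h y hfeas]
    · -- s₀ = 0 : unbounded direction
      obtain ⟨y, hyfeas⟩ := hne
      have hLneg : ∀ i, L i y₀ ≤ 0 := fun i => by have := hLy₀ i; rw [hs₀eq] at this; simpa using this
      have hdpos : 0 < d y₀ := by have := hdy₀; rw [hs₀eq] at this; simpa using this
      set τ : ℝ := max 0 ((β - d y + 1) / d y₀) with hτdef
      have hτ0 : 0 ≤ τ := le_max_left _ _
      have hfeas : ∀ i, L i (y + τ • y₀) ≤ b i := by
        intro i
        rw [map_add, map_smul, smul_eq_mul]
        have : τ * L i y₀ ≤ 0 := mul_nonpos_of_nonneg_of_nonpos hτ0 (hLneg i)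
        linarith [hyfeas i]
      have hviol : β < d (y + τ • y₀) := by
        rw [map_add, map_smul, smul_eq_mul]
        have h1 : (β - d y + 1) / d y₀ ≤ τ := le_max_right _ _
        have h2 : (β - d y + 1) = ((β - d y + 1) / d y₀) * d y₀ := by
          field_simp
        nlinarith
      linarith [h _ hfeas]
  -- extract the coefficients
  obtain ⟨lam, hlam, hsum⟩ := hmem
  refine ⟨fun i => lam (some i), fun i => hlam (some i), ?_, ?_⟩
  · intro y
    have h1 : tgt.1 = ∑ j, (lam j • gen j).1 := by rw [hsum, Prod.fst_sum]
    have h1a : ∀ a, d (Pi.single a 1) = ∑ i, lam (some i) * L i (Pi.single a 1) := by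
      intro a
      have := congrFun h1 a
      rw [htgt] at this
      simp only at this
      rw [Fintype.sum_option] at this
      simpa [hgen, Finset.sum_apply, Prod.smul_fst, Pi.smul_apply, smul_eq_mul] using this
    rw [lin_expand d y]
    have : ∀ i, L i y = ∑ a, y a * L i (Pi.single a 1) := fun i => lin_expand (L i) y
    simp_rw [this, Finset.mul_sum]
    rw [Finset.sum_comm]
    refine Finset.sum_congr rfl fun a _ => ?_
    rw [h1a a, Finset.mul_sum]
    exact Finset.sum_congr rfl fun i _ => by ring
  · have h2 : tgt.2 = ∑ j, (lam j • gen j).2 := by rw [hsum, Prod.snd_sum]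
    rw [htgt] at h2
    simp only at h2
    rw [Fintype.sum_option] at h2
    simp only [hgen, Prod.smul_snd, smul_eq_mul, mul_one] at h2
    have := hlam none
    rw [h2]
    simp only [mul_one]
    nlinarith [hlam none]

/-- A linear program whose value is approached attains it. -/
theorem lp_attain {κ : Type*} [Fintype κ] [DecidableEq κ] {ρ : Type*} [Fintype ρ]
    [DecidableEq ρ]
    (G : ρ → (κ → ℝ) →ₗ[ℝ] ℝ) (b : ρ → ℝ) (d : (κ → ℝ) →ₗ[ℝ] ℝ) (v : ℝ)
    (hub : ∀ y, (∀ i, G i y ≤ b i) → d y ≤ v)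
    (happrox : ∀ ε : ℝ, 0 < ε → ∃ y, (∀ i, G i y ≤ b i) ∧ v - ε ≤ d y) :
    ∃ y, (∀ i, G i y ≤ b i) ∧ d y = v := by
  classical
  set gen : ((κ ⊕ κ) ⊕ (ρ ⊕ Unit)) → ((ρ → ℝ) × ℝ) := fun j =>
    match j with
    | .inl (.inl a) => ((fun i => G i (Pi.single a 1)), d (Pi.single a 1))
    | .inl (.inr a) => ((fun i => - G i (Pi.single a 1)), - d (Pi.single a 1))
    | .inr (.inl i) => (Pi.single i 1, 0)
    | .inr (.inr _) => (0, -1)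
    with hgen
  set K : Set ((ρ → ℝ) × ℝ) :=
    {z | ∃ lam : ((κ ⊕ κ) ⊕ (ρ ⊕ Unit)) → ℝ, (∀ i, 0 ≤ lam i) ∧ z = ∑ i, lam i • gen i}
    with hK
  have hKclosed : IsClosed K := fg_cone_closed gen
  -- computation of the generic sum
  have hcomp : ∀ lam : ((κ ⊕ κ) ⊕ (ρ ⊕ Unit)) → ℝ,
      ∑ j, lam j • gen j =
        ((fun i => G i (fun a => lam (.inl (.inl a)) - lam (.inl (.inr a)))
            + lam (.inr (.inl i))),
          d (fun a => lam (.inl (.inl a)) - lam (.inl (.inr a))) - lam (.inr (.inr ()))) := by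
    intro lam
    set y : κ → ℝ := fun a => lam (.inl (.inl a)) - lam (.inl (.inr a)) with hy
    rw [Fintype.sum_sum_type, Fintype.sum_sum_type, Fintype.sum_sum_type]
    refine Prod.ext ?_ ?_
    · simp only [Prod.fst_add, Prod.fst_sum, Prod.smul_fst, hgen]
      funext i
      simp only [Pi.add_apply, Finset.sum_apply, Pi.smul_apply, smul_eq_mul]
      have h1 : ∀ L' : (κ → ℝ) →ₗ[ℝ] ℝ,
          (∑ a, lam (Sum.inl (Sum.inl a)) * L' (Pi.single a 1))
          + (∑ a, lam (Sum.inl (Sum.inr a)) * (- L' (Pi.single a 1))) = L' y := by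
        intro L'
        rw [lin_expand L' y, ← Finset.sum_add_distrib]
        refine Finset.sum_congr rfl fun a _ => by rw [hy]; ring
      have h2 : (∑ i' : ρ, lam (Sum.inr (Sum.inl i')) * (Pi.single i' 1 : ρ → ℝ) i)
          = lam (Sum.inr (Sum.inl i)) := by
        rw [Finset.sum_eq_single i]
        · simp
        · intro i' _ hne; simp [Pi.single_apply, hne]
        · intro h; exact absurd (Finset.mem_univ i) h
      calc (∑ a, lam (Sum.inl (Sum.inl a)) * G i (Pi.single a 1))
            + (∑ a, lam (Sum.inl (Sum.inr a)) * (- G i (Pi.single a 1)))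
            + ((∑ i' : ρ, lam (Sum.inr (Sum.inl i')) * (Pi.single i' 1 : ρ → ℝ) i)
              + (∑ u : Unit, lam (Sum.inr (Sum.inr u)) * (0:ℝ)))
          = G i y + lam (Sum.inr (Sum.inl i)) := by rw [h1 (G i), h2]; simp
        _ = _ := rfl
    · simp only [Prod.snd_add, Prod.snd_sum, Prod.smul_snd, hgen, smul_eq_mul]
      have h1 : (∑ a, lam (Sum.inl (Sum.inl a)) * d (Pi.single a 1))
          + (∑ a, lam (Sum.inl (Sum.inr a)) * (- d (Pi.single a 1))) = d y := by
        rw [lin_expand d y, ← Finset.sum_add_distrib]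
        refine Finset.sum_congr rfl fun a _ => by rw [hy]; ring
      calc (∑ a, lam (Sum.inl (Sum.inl a)) * d (Pi.single a 1))
            + (∑ a, lam (Sum.inl (Sum.inr a)) * (- d (Pi.single a 1)))
            + ((∑ i' : ρ, lam (Sum.inr (Sum.inl i')) * (0:ℝ))
              + (∑ u : Unit, lam (Sum.inr (Sum.inr u)) * (-1:ℝ)))
          = d y - lam (Sum.inr (Sum.inr ())) := by rw [h1]; simp; ring
        _ = _ := rfl
  -- the approximating points lie in K
  have hmemseq : ∀ n : ℕ, ((b, v - 1/(n+1)) : (ρ → ℝ) × ℝ) ∈ K := by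
    intro n
    have hε : (0:ℝ) < 1/(n+1) := by positivity
    obtain ⟨y, hyfeas, hyval⟩ := happrox _ hε
    refine ⟨fun j => match j with
      | .inl (.inl a) => max (y a) 0
      | .inl (.inr a) => max (-(y a)) 0
      | .inr (.inl i) => b i - G i y
      | .inr (.inr _) => d y - (v - 1/(n+1)), ?_, ?_⟩
    · rintro (⟨a | a⟩ | ⟨i | u⟩)
      · exact le_max_right _ _
      · exact le_max_right _ _
      · simpa using hyfeas i
      · simpa using hyval
    · rw [hcomp]
      have hyeq : (fun a => max (y a) 0 - max (-(y a)) 0) = y := by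
        funext a
        rcases le_total 0 (y a) with h | h
        · rw [max_eq_left h, max_eq_right (by linarith)]; ring
        · rw [max_eq_right h, max_eq_left (by linarith)]; ring
      refine Prod.ext ?_ ?_
      · funext i
        simp only [hyeq]
        ring
      · simp only [hyeq]
        ring
  -- pass to the limit
  have hlim : Filter.Tendsto (fun n : ℕ => ((b, v - 1/(n+1)) : (ρ → ℝ) × ℝ))
      Filter.atTop (nhds (b, v)) := by
    refine Filter.Tendsto.prodMk_nhds tendsto_const_nhds ?_
    have h0 : Filter.Tendsto (fun n : ℕ => 1/((n:ℝ)+1)) Filter.atTop (nhds 0) :=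
      tendsto_one_div_add_atTop_nhds_zero_nat
    have := (tendsto_const_nhds : Filter.Tendsto (fun _ : ℕ => v) Filter.atTop (nhds v)).sub h0
    simpa using this
  have hmem : ((b, v) : (ρ → ℝ) × ℝ) ∈ K :=
    hKclosed.mem_of_tendsto hlim (Filter.Eventually.of_forall hmemseq)
  -- unpack
  obtain ⟨lam, hlam, hsum⟩ := hmem
  rw [hcomp lam] at hsum
  set y : κ → ℝ := fun a => lam (.inl (.inl a)) - lam (.inl (.inr a)) with hy
  have h1 : ∀ i, G i y + lam (.inr (.inl i)) = b i := fun i => (congrFun (congrArg Prod.fst hsum) i).symm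
  have h2 : d y - lam (.inr (.inr ())) = v := (congrArg Prod.snd hsum).symm
  have hfeas : ∀ i, G i y ≤ b i := by
    intro i
    have := hlam (.inr (.inl i))
    linarith [h1 i]
  refine ⟨y, hfeas, le_antisymm (hub y hfeas) ?_⟩
  have := hlam (.inr (.inr ()))
  linarith

/-- The linear functional with coefficient vector `w`. -/
noncomputable def linW {κ : Type*} [Fintype κ] (w : κ → ℝ) : (κ → ℝ) →ₗ[ℝ] ℝ :=
  ∑ j, w j • LinearMap.proj j

theorem linW_apply {κ : Type*} [Fintype κ] (w z : κ → ℝ) :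
    linW w z = ∑ j, w j * z j := by
  simp [linW, LinearMap.sum_apply]

theorem sum_single_mul {κ : Type*} [Fintype κ] [DecidableEq κ] (j₀ : κ) (z : κ → ℝ) :
    ∑ j, (Pi.single j₀ 1 : κ → ℝ) j * z j = z j₀ := by
  rw [Finset.sum_eq_single j₀]
  · simp
  · intro j _ hne; simp [Pi.single_apply, hne]
  · intro h; exact absurd (Finset.mem_univ j₀) h

theorem sum_ite_finset {A : Type*} [Fintype A] [DecidableEq A] (A₁ : Finset A) (g : A → ℝ) :
    ∑ a, (if a ∈ A₁ then g a else 0) = ∑ a ∈ A₁, g a := by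
  rw [← Finset.sum_subset (Finset.subset_univ A₁) (fun a _ ha => by simp [ha])]
  exact Finset.sum_congr rfl (fun a ha => by simp [ha])

theorem sd_dual {A : Type*} [Fintype A] [DecidableEq A] {m : ℕ}
    (L : Fin m → (A → ℝ) →ₗ[ℝ] ℝ) (b : Fin m → ℝ) (w : A → ℝ) (val : ℝ)
    (hne : ∃ y, ∀ i, L i y ≤ b i)
    (hlb : ∀ y, (∀ i, L i y ≤ b i) → val ≤ ∑ a, w a * y a)
    (hatt : ∃ y, (∀ i, L i y ≤ b i) ∧ val = ∑ a, w a * y a) :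
    ∃ lam : Fin m → ℝ, (∀ i, 0 ≤ lam i) ∧
      (∀ a, ∑ i, lam i * L i (Pi.single a 1) = -(w a)) ∧
      ∑ i, lam i * b i = -val := by
  obtain ⟨lam, hlam, heq, hble⟩ := farkas L b (-(linW w)) (-val) hne (fun y hy => by
    simp only [LinearMap.neg_apply, linW_apply]
    linarith [hlb y hy])
  refine ⟨lam, hlam, ?_, ?_⟩
  · intro a
    have := heq (Pi.single a 1)
    rw [LinearMap.neg_apply, linW_apply] at this
    rw [this]
    congr 1
    rw [Finset.sum_eq_single a]
    · simp
    · intro b _ hne'; simp [Pi.single_apply, hne']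
    · intro h; exact absurd (Finset.mem_univ a) h
  · refine le_antisymm hble ?_
    obtain ⟨y₀, hy₀f, hy₀v⟩ := hatt
    have h1 := heq y₀
    rw [LinearMap.neg_apply, linW_apply, ← hy₀v] at h1
    have h2 : ∑ i, lam i * L i y₀ ≤ ∑ i, lam i * b i :=
      Finset.sum_le_sum fun i _ => mul_le_mul_of_nonneg_left (hy₀f i) (hlam i)
    linarith

theorem eqs_to_all {A : Type*} [Fintype A] [DecidableEq A] {m : ℕ}
    (L : Fin m → (A → ℝ) →ₗ[ℝ] ℝ) (lam : Fin m → ℝ) (w : A → ℝ)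
    (h : ∀ a, ∑ i, lam i * L i (Pi.single a 1) = -(w a)) :
    ∀ y, ∑ i, lam i * L i y = -(∑ a, w a * y a) := by
  intro y
  calc ∑ i, lam i * L i y = ∑ i, ∑ a, y a * (lam i * L i (Pi.single a 1)) := by
        refine Finset.sum_congr rfl fun i _ => ?_
        rw [lin_expand (L i) y, Finset.mul_sum]
        exact Finset.sum_congr rfl fun a _ => by ring
    _ = ∑ a, y a * ∑ i, lam i * L i (Pi.single a 1) := by
        rw [Finset.sum_comm]
        exact Finset.sum_congr rfl fun a _ => by rw [Finset.mul_sum]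
    _ = -(∑ a, w a * y a) := by
        simp_rw [h]
        rw [← Finset.sum_neg_distrib]
        exact Finset.sum_congr rfl fun a _ => by ring

end Auxiliary

/-- `x ∈ X` is bilevel feasible (optimal to the follower for some
toll `t ≥ 0`) iff its base cost `⟨c, x⟩` equals `g(x_{A₁})`, the concave
conjugate of `f` over `t ≥ 0`. -/
theorem stmt16 (A : Type*) [Fintype A] (A₁ : Finset A)
    (c : A → ℝ) (hc : ∀ a, 0 ≤ c a)
    (X : Set (A → ℝ)) (hXne : X.Nonempty) (hXpoly : IsPolyhedron X)
    (hXpos : ∀ x ∈ X, ∀ a, 0 ≤ x a)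
    (f : (A → ℝ) → ℝ)
    (hf : ∀ t : A → ℝ, (∀ a, 0 ≤ t a) →
      IsLeast {s | ∃ x ∈ X, s = (∑ a, c a * x a) + ∑ a ∈ A₁, t a * x a} (f t))
    (x : A → ℝ) (hx : x ∈ X) :
    (∃ t : A → ℝ, (∀ a, 0 ≤ t a) ∧
        f t = (∑ a, c a * x a) + ∑ a ∈ A₁, t a * x a) ↔
      (∑ a, c a * x a) =
        sSup {s | ∃ t : A → ℝ, (∀ a, 0 ≤ t a) ∧
          s = f t - ∑ a ∈ A₁, t a * x a} := by
  classical
  obtain ⟨m, L, b, hXeq⟩ := hXpoly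
  have hfeas_of_mem : ∀ y ∈ X, ∀ i, L i y ≤ b i := fun y hy => by rw [hXeq] at hy; exact hy
  have hmem_of_feas : ∀ y, (∀ i, L i y ≤ b i) → y ∈ X := fun y hy => by rw [hXeq]; exact hy
  have hne : ∃ y, ∀ i, L i y ≤ b i := ⟨hXne.choose, hfeas_of_mem _ hXne.choose_spec⟩
  set C : ℝ := ∑ a, c a * x a with hCdef
  set S : Set ℝ := {s | ∃ t : A → ℝ, (∀ a, 0 ≤ t a) ∧
    s = f t - ∑ a ∈ A₁, t a * x a} with hSdef
  have hwt : ∀ (t : A → ℝ) (y : A → ℝ),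
      (∑ a, (c a + (if a ∈ A₁ then t a else 0)) * y a)
        = (∑ a, c a * y a) + ∑ a ∈ A₁, t a * y a := by
    intro t y
    simp_rw [add_mul]
    rw [Finset.sum_add_distrib]
    congr 1
    rw [← sum_ite_finset A₁ (fun a => t a * y a)]
    exact Finset.sum_congr rfl fun a _ => by split <;> simp
  have hubS : ∀ s ∈ S, s ≤ C := by
    rintro s ⟨t, ht, rfl⟩
    have h1 := (hf t ht).2 ⟨x, hx, rfl⟩
    rw [hCdef]
    linarith
  have hSne : S.Nonempty := ⟨f (fun _ => 0) - ∑ a ∈ A₁, (fun _ : A => (0:ℝ)) a * x a,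
    fun _ => (0:ℝ), fun _ => le_rfl, rfl⟩
  constructor
  · rintro ⟨t, ht, hteq⟩
    exact le_antisymm (le_csSup ⟨C, hubS⟩ ⟨t, ht, by rw [hteq]; ring⟩) (csSup_le hSne hubS)
  · intro hC
    have hSD : ∀ t : A → ℝ, (∀ a, 0 ≤ t a) →
        ∃ lam : Fin m → ℝ, (∀ i, 0 ≤ lam i) ∧
          (∀ a, ∑ i, lam i * L i (Pi.single a 1)
            = -(c a + (if a ∈ A₁ then t a else 0))) ∧
          ∑ i, lam i * b i = -(f t) := by
      intro t ht
      refine sd_dual L b (fun a => c a + (if a ∈ A₁ then t a else 0)) (f t) hne ?_ ?_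
      · intro y hy
        rw [hwt t y]
        exact (hf t ht).2 ⟨y, hmem_of_feas y hy, rfl⟩
      · obtain ⟨⟨y₀, hy₀X, hy₀v⟩, _⟩ := hf t ht
        exact ⟨y₀, hfeas_of_mem y₀ hy₀X, by rw [hwt t y₀]; exact hy₀v⟩
    -- the big LP over (A ⊕ Fin m) → ℝ
    set wE : A → ((A ⊕ Fin m) → ℝ) := fun a =>
      Sum.elim (fun a' => if a ∈ A₁ ∧ a' = a then 1 else 0)
        (fun i => L i (Pi.single a 1)) with hwE
    set G : ((A ⊕ Fin m) ⊕ (A ⊕ A)) → ((A ⊕ Fin m) → ℝ) →ₗ[ℝ] ℝ :=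
      Sum.elim (fun j => linW (-(Pi.single j 1)))
        (Sum.elim (fun a => linW (wE a)) (fun a => linW (-(wE a)))) with hG
    set bb : ((A ⊕ Fin m) ⊕ (A ⊕ A)) → ℝ :=
      Sum.elim (fun _ => 0) (Sum.elim (fun a => -(c a)) c) with hbb
    set dd : ((A ⊕ Fin m) → ℝ) →ₗ[ℝ] ℝ :=
      linW (Sum.elim (fun a => if a ∈ A₁ then -(x a) else 0) (fun i => -(b i))) with hdd
    have hnegW : ∀ (w : (A ⊕ Fin m) → ℝ) z, linW (-w) z = -(linW w z) := by
      intro w z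
      rw [linW_apply, linW_apply, ← Finset.sum_neg_distrib]
      exact Finset.sum_congr rfl fun j _ => by simp
    have helim : ∀ (u : A → ℝ) (wq : Fin m → ℝ) (z : (A ⊕ Fin m) → ℝ),
        (∑ j, (Sum.elim u wq) j * z j)
          = (∑ a, u a * z (Sum.inl a)) + ∑ i, wq i * z (Sum.inr i) := by
      intro u wq z
      rw [Fintype.sum_sum_type]
      simp
    have hwEapp : ∀ (a : A) (z : (A ⊕ Fin m) → ℝ), linW (wE a) z
        = (if a ∈ A₁ then z (Sum.inl a) else 0)
          + ∑ i, L i (Pi.single a 1) * z (Sum.inr i) := by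
      intro a z
      rw [linW_apply, hwE, helim]
      congr 1
      by_cases ha : a ∈ A₁
      · simp only [ha, true_and, if_true]
        rw [Finset.sum_eq_single a]
        · simp
        · intro a' _ hne'; simp [hne']
        · intro h; exact absurd (Finset.mem_univ a) h
      · simp [ha]
    have hddapp : ∀ z : (A ⊕ Fin m) → ℝ, dd z
        = -(∑ a ∈ A₁, x a * z (Sum.inl a)) - ∑ i, b i * z (Sum.inr i) := by
      intro z
      rw [hdd, linW_apply, helim]
      have h1 : (∑ a, (if a ∈ A₁ then -(x a) else 0) * z (Sum.inl a))
          = -(∑ a ∈ A₁, x a * z (Sum.inl a)) := by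
        rw [← Finset.sum_neg_distrib, ← sum_ite_finset A₁ (fun a => -(x a * z (Sum.inl a)))]
        · exact Finset.sum_congr rfl fun a _ => by split <;> simp
      have h2 : (∑ i, -(b i) * z (Sum.inr i)) = -(∑ i, b i * z (Sum.inr i)) := by
        rw [← Finset.sum_neg_distrib]
        exact Finset.sum_congr rfl fun i _ => by ring
      rw [h1, h2]
      ring
    have hfeasG : ∀ z : (A ⊕ Fin m) → ℝ,
        (∀ r, G r z ≤ bb r) ↔
          ((∀ j, 0 ≤ z j) ∧
           ∀ a, (if a ∈ A₁ then z (Sum.inl a) else 0)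
              + ∑ i, L i (Pi.single a 1) * z (Sum.inr i) = -(c a)) := by
      intro z
      constructor
      · intro h
        constructor
        · intro j
          have h1 := h (Sum.inl j)
          rw [hG, hbb] at h1
          simp only [Sum.elim_inl] at h1
          rw [hnegW, linW_apply, sum_single_mul] at h1
          linarith
        · intro a
          have h1 := h (Sum.inr (Sum.inl a))
          have h2 := h (Sum.inr (Sum.inr a))
          rw [hG, hbb] at h1 h2
          simp only [Sum.elim_inr, Sum.elim_inl] at h1 h2
          rw [hwEapp] at h1
          rw [hnegW, hwEapp] at h2
          linarith
      · rintro ⟨h0, heqs⟩ r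
        rcases r with j | (a | a)
        · rw [hG, hbb]
          simp only [Sum.elim_inl]
          rw [hnegW, linW_apply, sum_single_mul]
          linarith [h0 j]
        · rw [hG, hbb]
          simp only [Sum.elim_inr, Sum.elim_inl]
          rw [hwEapp]
          linarith [heqs a]
        · rw [hG, hbb]
          simp only [Sum.elim_inr]
          rw [hnegW, hwEapp]
          linarith [heqs a]
    -- weak duality
    have hub2 : ∀ z, (∀ r, G r z ≤ bb r) → dd z ≤ C := by
      intro z hz
      obtain ⟨h0, heqs⟩ := (hfeasG z).1 hz
      set t : A → ℝ := fun a => z (Sum.inl a) with htdef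
      set lz : Fin m → ℝ := fun i => z (Sum.inr i) with hlzdef
      have heqs' : ∀ a, ∑ i, lz i * L i (Pi.single a 1)
          = -(c a + (if a ∈ A₁ then t a else 0)) := by
        intro a
        have h1 := heqs a
        have hsw : ∑ i, L i (Pi.single a 1) * z (Sum.inr i)
            = ∑ i, lz i * L i (Pi.single a 1) :=
          Finset.sum_congr rfl fun i _ => mul_comm _ _
        rw [hsw] at h1
        rw [htdef]
        linarith
      have hall := eqs_to_all L lz (fun a => c a + (if a ∈ A₁ then t a else 0)) heqs' x
      rw [hwt t x] at hall
      have hle : ∑ i, lz i * L i x ≤ ∑ i, lz i * b i :=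
        Finset.sum_le_sum fun i _ =>
          mul_le_mul_of_nonneg_left (hfeas_of_mem x hx i) (h0 (Sum.inr i))
      rw [hddapp z]
      have hc1 : ∑ a ∈ A₁, x a * z (Sum.inl a) = ∑ a ∈ A₁, t a * x a :=
        Finset.sum_congr rfl fun a _ => mul_comm _ _
      have hc2 : ∑ i, b i * z (Sum.inr i) = ∑ i, lz i * b i :=
        Finset.sum_congr rfl fun i _ => mul_comm _ _
      rw [hc1, hc2]
      rw [← hCdef] at hall
      linarith
    -- approximation
    have happrox2 : ∀ ε : ℝ, 0 < ε → ∃ z, (∀ r, G r z ≤ bb r) ∧ C - ε ≤ dd z := by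
      intro ε hε
      have hlt : C - ε < sSup S := by rw [← hC]; linarith
      obtain ⟨s, hsmem, hslt⟩ := exists_lt_of_lt_csSup hSne hlt
      obtain ⟨t, ht, rfl⟩ := hsmem
      obtain ⟨lam, hlam, heqs, hval⟩ := hSD t ht
      refine ⟨Sum.elim t lam, ?_, ?_⟩
      · rw [hfeasG]
        constructor
        · rintro (a | i)
          · exact ht a
          · exact hlam i
        · intro a
          have h1 := heqs a
          have hsw : ∑ i, L i (Pi.single a 1) * (Sum.elim t lam) (Sum.inr i)
              = ∑ i, lam i * L i (Pi.single a 1) :=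
            Finset.sum_congr rfl fun i _ => by simp [mul_comm]
          rw [hsw]
          simp only [Sum.elim_inl]
          linarith
      · rw [hddapp]
        have hc1 : ∑ a ∈ A₁, x a * (Sum.elim t lam) (Sum.inl a) = ∑ a ∈ A₁, t a * x a :=
          Finset.sum_congr rfl fun a _ => by simp [mul_comm]
        have hc2 : ∑ i, b i * (Sum.elim t lam) (Sum.inr i) = ∑ i, lam i * b i :=
          Finset.sum_congr rfl fun i _ => by simp [mul_comm]
        rw [hc1, hc2, hval]
        linarith
    obtain ⟨z, hzfeas, hzval⟩ := lp_attain G bb dd C hub2 happrox2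
    obtain ⟨h0, heqs⟩ := (hfeasG z).1 hzfeas
    set t : A → ℝ := fun a => z (Sum.inl a) with htdef
    set lz : Fin m → ℝ := fun i => z (Sum.inr i) with hlzdef
    have ht : ∀ a, 0 ≤ t a := fun a => h0 (Sum.inl a)
    refine ⟨t, ht, ?_⟩
    have hupper := (hf t ht).2 ⟨x, hx, rfl⟩
    have heqs' : ∀ a, ∑ i, lz i * L i (Pi.single a 1)
        = -(c a + (if a ∈ A₁ then t a else 0)) := by
      intro a
      have h1 := heqs a
      have hsw : ∑ i, L i (Pi.single a 1) * z (Sum.inr i)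
          = ∑ i, lz i * L i (Pi.single a 1) :=
        Finset.sum_congr rfl fun i _ => mul_comm _ _
      rw [hsw] at h1
      rw [htdef]
      linarith
    obtain ⟨⟨y₀, hy₀X, hy₀v⟩, _⟩ := hf t ht
    have h1 := eqs_to_all L lz (fun a => c a + (if a ∈ A₁ then t a else 0)) heqs' y₀
    rw [hwt t y₀] at h1
    have h2 : ∑ i, lz i * L i y₀ ≤ ∑ i, lz i * b i :=
      Finset.sum_le_sum fun i _ =>
        mul_le_mul_of_nonneg_left (hfeas_of_mem y₀ hy₀X i) (h0 (Sum.inr i))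
    rw [hddapp z] at hzval
    have hc1 : ∑ a ∈ A₁, x a * z (Sum.inl a) = ∑ a ∈ A₁, t a * x a :=
      Finset.sum_congr rfl fun a _ => mul_comm _ _
    have hc2 : ∑ i, b i * z (Sum.inr i) = ∑ i, lz i * b i :=
      Finset.sum_congr rfl fun i _ => mul_comm _ _
    rw [hc1, hc2] at hzval
    rw [← hCdef] at hupper
    linarith
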